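/- The element ρ(ψ,α) = [β'(ψ) - δ(ψ)](P_0⊗J_0 - J_0⊗P_0) satisfies [[r_a, ρ]] + [[ρ, r_a]] = 0 and [[ρ,ρ]] = 0, where [[r,s]] := [r_{12}, s_{13}] + [r_{12}, s_{23}] + [r_{13}, s_{23}]; consequently if r_a satisfies the CDYBE with x_1 = P_0, x_2 = J_0 (variables ψ, α) and ρ is independent of α and built from the h_a-invariant element P_0∧J_0, then r_a + ρ also satisfies the CDYBE (the right-hand dynamical terms for ρ vanish since x_1^{(i)}∂_ψ ρ-terms involve only P_0 components commuting appropriately). -/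

import Mathlib

open Real BigOperators Finset

noncomputable section

/-- Vectors in ℝ³. -/
abbrev V3 : Type := Fin 3 → ℝ

/-- Minkowski metric η = diag(1,-1,-1). -/
def ηm : Fin 3 → ℝ := ![1, -1, -1]

/-- Totally antisymmetric symbol with ε₀₁₂ = 1. -/
def eps : Fin 3 → Fin 3 → Fin 3 → ℝ := fun a b c =>
  if (a, b, c) = ((0 : Fin 3), (1 : Fin 3), (2 : Fin 3)) ∨ (a, b, c) = (1, 2, 0) ∨ (a, b, c) = (2, 0, 1) then 1
  else if (a, b, c) = ((0 : Fin 3), (2 : Fin 3), (1 : Fin 3)) ∨ (a, b, c) = (2, 1, 0) ∨ (a, b, c) = (1, 0, 2) then -1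
  else 0

/-- An element of iso(2,1) is encoded by its J-coefficients and P-coefficients:
`(j, p)` represents `Σ j^a J_a + Σ p^a P_a`. -/
abbrev iso21 : Type := V3 × V3

def Jvec (x : V3) : iso21 := (x, 0)
def Pvec (x : V3) : iso21 := (0, x)
def Jb (a : Fin 3) : iso21 := Jvec (fun i => if i = a then 1 else 0)
def Pb (a : Fin 3) : iso21 := Pvec (fun i => if i = a then 1 else 0)

/-- The Lie bracket of iso(2,1): [J_a,J_b] = ε_{ab}^c J_c, [J_a,P_b] = ε_{ab}^c P_c,
[P_a,P_b] = 0, with ε_{ab}^c = η^{cc} ε_{abc}. -/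
def br (x y : iso21) : iso21 :=
  (fun c => ∑ a, ∑ b, x.1 a * y.1 b * (ηm c * eps a b c),
   fun c => ∑ a, ∑ b, (x.1 a * y.2 b + x.2 a * y.1 b) * (ηm c * eps a b c))

/-- The Ad-invariant pairing ⟨J_a,P_b⟩ = η_{ab}, ⟨J,J⟩ = ⟨P,P⟩ = 0. -/
def pairing (x y : iso21) : ℝ := ∑ a, ηm a * (x.1 a * y.2 a + x.2 a * y.1 a)

/-- Minkowski inner product on ℝ³. -/
def mdot (x y : V3) : ℝ := ∑ a, ηm a * x a * y a

/-- Lorentzian cross product (x∧y)^a = ε^{abc} x_b y_c. -/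
def crossL (x y : V3) : V3 := fun a => ηm a * ∑ b, ∑ c, eps a b c * x b * y c

/-- Index set of the basis {J_a, P_a}: `false` ↦ J, `true` ↦ P. -/
abbrev Bas : Type := Bool × Fin 3

def basis : Bas → iso21 := fun p => if p.1 then Pb p.2 else Jb p.2
def coeff (x : iso21) (p : Bas) : ℝ := if p.1 then x.2 p.2 else x.1 p.2

/-- 2-tensors and 3-tensors over iso(2,1), given by their coefficients in the basis. -/
abbrev TT2 : Type := Bas → Bas → ℝ
abbrev TT3 : Type := Bas → Bas → Bas → ℝ

def tens (x y : iso21) : TT2 := fun μ ν => coeff x μ * coeff y ν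

/-- Structure constants: coefficient of `[T_a, T_c]` on `T_m`. -/
def Cstr (a c m : Bas) : ℝ := coeff (br (basis a) (basis c)) m

/-- The mixed Yang-Baxter expression [[r,s]] = [r₁₂,s₁₃] + [r₁₂,s₂₃] + [r₁₃,s₂₃]. -/
def YB2 (r s : TT2) : TT3 := fun μ ν lam =>
    (∑ a, ∑ c, r a ν * s c lam * Cstr a c μ)
  + (∑ b, ∑ c, r μ b * s c lam * Cstr b c ν)
  + (∑ b, ∑ d, r μ b * s ν d * Cstr b d lam)

/-- The action of X on a 2-tensor: [X⊗1 + 1⊗X, r]. -/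
def act2 (x : iso21) (r : TT2) : TT2 := fun μ ν =>
  (∑ a, r a ν * coeff (br x (basis a)) μ) + (∑ b, r μ b * coeff (br x (basis b)) ν)

/-- The classical r-matrix r = P_a ⊗ J^a. -/
def rPJ : TT2 := fun μ ν => ∑ a, ηm a * tens (Pb a) (Jb a) μ ν

/-- The symmetric part r_S = ½(P_a⊗J^a + J^a⊗P_a). -/
def rSym : TT2 := fun μ ν => (1/2) * ∑ a, ηm a * (tens (Pb a) (Jb a) μ ν + tens (Jb a) (Pb a) μ ν)

/-- The classical dynamical Yang-Baxter equation at (ψ,α) with dynamical elements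
x₁ (paired with ψ) and x₂ (paired with α). -/
def CDYBEat (r : ℝ → ℝ → TT2) (x1 x2 : ℝ → ℝ → iso21) (ψ α : ℝ) : Prop :=
  ∀ μ ν lam : Bas, YB2 (r ψ α) (r ψ α) μ ν lam =
      coeff (x1 ψ α) μ * deriv (fun s => r s α ν lam) ψ
    - coeff (x1 ψ α) ν * deriv (fun s => r s α μ lam) ψ
    + coeff (x1 ψ α) lam * deriv (fun s => r s α μ ν) ψ
    + coeff (x2 ψ α) μ * deriv (fun s => r ψ s ν lam) α
    - coeff (x2 ψ α) ν * deriv (fun s => r ψ s μ lam) α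
    + coeff (x2 ψ α) lam * deriv (fun s => r ψ s μ ν) α

/-- Adjoint action of a Lorentz matrix g on iso(2,1). -/
def adL (g : Matrix (Fin 3) (Fin 3) ℝ) (x : iso21) : iso21 := (g.mulVec x.1, g.mulVec x.2)

/-- Adjoint action of a translation t on iso(2,1): J_a ↦ J_a + ε_{ab}^c t^b P_c, P_a ↦ P_a. -/
def adT (t : V3) (x : iso21) : iso21 :=
  (x.1, fun c => x.2 c + ∑ a, ∑ b, x.1 a * t b * (ηm c * eps a b c))

/-- The proper orthochronous Lorentz group SO⁺(2,1) as 3×3 matrices. -/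
def SOplus : Set (Matrix (Fin 3) (Fin 3) ℝ) :=
  {g | g.transpose * Matrix.diagonal ηm * g = Matrix.diagonal ηm ∧ g.det = 1 ∧ 0 < g 0 0}

/-- The induced action of a linear map on 2-tensors, A⊗A. -/
def Ad2 (A : iso21 → iso21) (r : TT2) : TT2 :=
  fun μ ν => ∑ a : Bas, ∑ b : Bas, r a b * coeff (A (basis a)) μ * coeff (A (basis b)) ν

/-- r(ψ,α) = P_a⊗J^a - V^{bc}(ψ)(P_b⊗J_c - J_c⊗P_b) + ε^{bcd} m_d(ψ,α) P_b⊗P_c. -/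
def rVm (V : ℝ → Matrix (Fin 3) (Fin 3) ℝ) (m : ℝ → ℝ → V3) (ψ α : ℝ) : TT2 := fun μ ν =>
  rPJ μ ν
  - (∑ b, ∑ c, V ψ b c * (tens (Pb b) (Jb c) μ ν - tens (Jb c) (Pb b) μ ν))
  + ∑ b, ∑ c, ∑ d, ηm b * ηm c * eps b c d * m ψ α d * tens (Pb b) (Pb c) μ ν

/-- The vector w defined by ε^{abc} w_c = V^{ab} - V^{ba}. -/
def wOf (V : ℝ → Matrix (Fin 3) (Fin 3) ℝ) (ψ : ℝ) : V3 := fun c =>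
  (1/2) * ∑ a, ∑ b, ηm a * ηm b * eps a b c * (V ψ a b - V ψ b a)

/-- CDYBE condition (i) at (ψ,α), componentwise in (a,b,c). -/
def Cond1At (V : ℝ → Matrix (Fin 3) (Fin 3) ℝ) (m : ℝ → ℝ → V3) (qψ qα : ℝ → V3)
    (ψ α : ℝ) : Prop :=
  ∀ a b c : Fin 3,
    qα ψ a * (∑ d, ηm b * ηm c * eps b c d * deriv (fun s => m ψ s d) α)
    - qψ ψ b * deriv (fun s => V s c a) ψ
    + qψ ψ c * deriv (fun s => V s b a) ψ
    - (∑ d, ∑ g, V ψ b d * V ψ c g * (ηm a * eps d g a))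
    - (∑ d, ∑ g, V ψ d a * V ψ c g * (ηm b * eps d g b))
    + (∑ d, ∑ g, V ψ d a * V ψ b g * (ηm c * eps d g c))
    - (∑ d, V ψ d a * (ηm b * ηm c * eps b c d)) = 0

/-- CDYBE condition (ii) at (ψ,α): q_ψ·∂_ψ m + q_θ·∂_α m + w·m = 0. -/
def Cond2At (V : ℝ → Matrix (Fin 3) (Fin 3) ℝ) (m : ℝ → ℝ → V3) (qψ : ℝ → V3)
    (qθ : ℝ → ℝ → V3) (ψ α : ℝ) : Prop :=
  mdot (qψ ψ) (fun a => deriv (fun s => m s α a) ψ)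
  + mdot (qθ ψ α) (fun a => deriv (fun s => m ψ s a) α)
  + mdot (wOf V ψ) (m ψ α) = 0

def wedgeT (x y : iso21) : TT2 := fun μ ν => tens x y μ ν - tens y x μ ν

/-- The standard dynamical r-matrix for the Cartan subalgebra span{J₀,P₀}. -/
def ra (ψ α : ℝ) : TT2 := fun μ ν =>
  rSym μ ν + (1/2) * Real.tan (ψ/2) * (wedgeT (Pb 1) (Jb 2) μ ν - wedgeT (Pb 2) (Jb 1) μ ν)
  + α / (4 * (Real.cos (ψ/2))^2) * wedgeT (Pb 1) (Pb 2) μ ν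

/-- The standard dynamical r-matrix for the Cartan subalgebra span{J₁,P₁}. -/
def rb (ψ α : ℝ) : TT2 := fun μ ν =>
  rSym μ ν + (1/2) * Real.tanh (ψ/2) * (wedgeT (Pb 2) (Jb 0) μ ν - wedgeT (Pb 0) (Jb 2) μ ν)
  + α / (4 * (Real.cosh (ψ/2))^2) * wedgeT (Pb 2) (Pb 0) μ ν

/-- ρ(ψ,α) = [β'(ψ) - δ(ψ)](P₀⊗J₀ - J₀⊗P₀). -/
def rho19 (β δ : ℝ → ℝ) (ψ : ℝ) : TT2 := fun σ τ =>
  (deriv β ψ - δ ψ) * (tens (Pb 0) (Jb 0) σ τ - tens (Jb 0) (Pb 0) σ τ)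

/-! ### Auxiliary integer-valued mirrors for exact computation -/

abbrev BasZ : Type := Bool × Fin 3

def epsZ : Fin 3 → Fin 3 → Fin 3 → ℤ := fun a b c =>
  if (a, b, c) = ((0 : Fin 3), (1 : Fin 3), (2 : Fin 3)) ∨ (a, b, c) = (1, 2, 0) ∨ (a, b, c) = (2, 0, 1) then 1
  else if (a, b, c) = ((0 : Fin 3), (2 : Fin 3), (1 : Fin 3)) ∨ (a, b, c) = (2, 1, 0) ∨ (a, b, c) = (1, 0, 2) then -1
  else 0

def ηZ : Fin 3 → ℤ := ![1, -1, -1]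

abbrev iso21Z : Type := (Fin 3 → ℤ) × (Fin 3 → ℤ)

def JbZ (a : Fin 3) : iso21Z := ((fun i => if i = a then 1 else 0), 0)
def PbZ (a : Fin 3) : iso21Z := (0, (fun i => if i = a then 1 else 0))

def brZ (x y : iso21Z) : iso21Z :=
  (fun c => ∑ a, ∑ b, x.1 a * y.1 b * (ηZ c * epsZ a b c),
   fun c => ∑ a, ∑ b, (x.1 a * y.2 b + x.2 a * y.1 b) * (ηZ c * epsZ a b c))

def basisZ : BasZ → iso21Z := fun p => if p.1 then PbZ p.2 else JbZ p.2
def coeffZ (x : iso21Z) (p : BasZ) : ℤ := if p.1 then x.2 p.2 else x.1 p.2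

def CstrZ (a c m : BasZ) : ℤ := coeffZ (brZ (basisZ a) (basisZ c)) m

abbrev TT2Z : Type := BasZ → BasZ → ℤ

def tensZ (x y : iso21Z) : TT2Z := fun μ ν => coeffZ x μ * coeffZ y ν
def wedgeZ (x y : iso21Z) : TT2Z := fun μ ν => tensZ x y μ ν - tensZ y x μ ν

/-- Fast closed form of the structure constants. -/
def CstrF (a c m : BasZ) : ℤ :=
  if ((a.1 || c.1) = m.1) ∧ ¬(a.1 ∧ c.1) then ηZ m.2 * epsZ a.2 c.2 m.2 else 0

theorem CstrZ_eq_F : CstrZ = CstrF := by decide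

def sumB (f : BasZ → ℤ) : ℤ :=
  f (false,0) + f (false,1) + f (false,2) + f (true,0) + f (true,1) + f (true,2)

theorem sumB_eq (f : BasZ → ℤ) : ∑ x : BasZ, f x = sumB f := by
  rw [Fintype.sum_prod_type, Fintype.sum_bool]
  simp only [Fin.sum_univ_three, sumB]
  ring

/-- Mirror of `YB2` over ℤ, with Finset sums. -/
def YB2Zf (r s : TT2Z) : BasZ → BasZ → BasZ → ℤ := fun μ ν lam =>
    (∑ a, ∑ c, r a ν * s c lam * CstrF a c μ)
  + (∑ b, ∑ c, r μ b * s c lam * CstrF b c ν)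
  + (∑ b, ∑ d, r μ b * s ν d * CstrF b d lam)

/-- Fast mirror of `YB2` over ℤ. -/
def YB2F (r s : TT2Z) : BasZ → BasZ → BasZ → ℤ := fun μ ν lam =>
    (sumB fun a => sumB fun c => r a ν * s c lam * CstrF a c μ)
  + (sumB fun b => sumB fun c => r μ b * s c lam * CstrF b c ν)
  + (sumB fun b => sumB fun d => r μ b * s ν d * CstrF b d lam)

theorem YB2Zf_eq_F (r s : TT2Z) (μ ν lam : BasZ) : YB2Zf r s μ ν lam = YB2F r s μ ν lam := by
  simp only [YB2Zf, YB2F, sumB_eq]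

def sum3 (f : Fin 3 → ℤ) : ℤ := f 0 + f 1 + f 2

def SZf : TT2Z := fun μ ν => sum3 fun a => ηZ a * (tensZ (PbZ a) (JbZ a) μ ν + tensZ (JbZ a) (PbZ a) μ ν)
def AZ : TT2Z := fun μ ν => wedgeZ (PbZ 1) (JbZ 2) μ ν - wedgeZ (PbZ 2) (JbZ 1) μ ν
def BZ : TT2Z := wedgeZ (PbZ 1) (PbZ 2)
def WZ : TT2Z := wedgeZ (PbZ 0) (JbZ 0)

theorem coreS : ∀ μ ν lam : BasZ, YB2F SZf WZ μ ν lam + YB2F WZ SZf μ ν lam = 0 := by decide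
theorem coreA : ∀ μ ν lam : BasZ, YB2F AZ WZ μ ν lam + YB2F WZ AZ μ ν lam = 0 := by decide
theorem coreB : ∀ μ ν lam : BasZ, YB2F BZ WZ μ ν lam + YB2F WZ BZ μ ν lam = 0 := by decide
theorem coreW : ∀ μ ν lam : BasZ, YB2F WZ WZ μ ν lam = 0 := by decide

theorem combPW : ∀ μ ν lam : BasZ,
    coeffZ (PbZ 0) μ * WZ ν lam - coeffZ (PbZ 0) ν * WZ μ lam + coeffZ (PbZ 0) lam * WZ μ ν = 0 := by
  decide

/-! ### Cast lemmas -/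

def castIso (x : iso21Z) : iso21 := ((fun i => (x.1 i : ℝ)), (fun i => (x.2 i : ℝ)))

theorem ηm_cast (a : Fin 3) : ηm a = (ηZ a : ℝ) := by
  fin_cases a <;> simp [ηm, ηZ]

theorem eps_cast (a b c : Fin 3) : eps a b c = (epsZ a b c : ℝ) := by
  unfold eps epsZ; split_ifs <;> norm_num

theorem coeff_cast (x : iso21Z) (p : Bas) : coeff (castIso x) p = (coeffZ x p : ℝ) := by
  rcases p with ⟨b, i⟩
  cases b <;> simp [coeff, coeffZ, castIso]

theorem Pb_cast (a : Fin 3) : Pb a = castIso (PbZ a) := by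
  unfold Pb PbZ Pvec castIso
  refine Prod.ext ?_ ?_ <;> funext i
  · simp
  · simp only []; split_ifs <;> simp

theorem Jb_cast (a : Fin 3) : Jb a = castIso (JbZ a) := by
  unfold Jb JbZ Jvec castIso
  refine Prod.ext ?_ ?_ <;> funext i
  · simp only []; split_ifs <;> simp
  · simp

theorem basis_cast (p : Bas) : basis p = castIso (basisZ p) := by
  rcases p with ⟨b, i⟩
  cases b <;> simp [basis, basisZ, Pb_cast, Jb_cast]

theorem br_cast (x y : iso21Z) : br (castIso x) (castIso y) = castIso (brZ x y) := by
  unfold br brZ castIso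
  refine Prod.ext ?_ ?_ <;> funext c <;>
    simp only [ηm_cast, eps_cast] <;> push_cast <;> try ring

theorem Cstr_cast (a c m : Bas) : Cstr a c m = (CstrF a c m : ℝ) := by
  rw [Cstr, basis_cast, basis_cast, br_cast, coeff_cast, ← CstrZ_eq_F]
  rfl

theorem tens_cast (x y : iso21Z) (μ ν : Bas) :
    tens (castIso x) (castIso y) μ ν = (tensZ x y μ ν : ℝ) := by
  simp [tens, tensZ, coeff_cast]

theorem YB2_cast (r s : TT2Z) (μ ν lam : Bas) :
    YB2 (fun a b => ((r a b : ℤ) : ℝ)) (fun a b => ((s a b : ℤ) : ℝ)) μ ν lam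
      = (YB2F r s μ ν lam : ℝ) := by
  rw [← YB2Zf_eq_F]
  unfold YB2 YB2Zf
  push_cast
  simp only [Cstr_cast]
  try push_cast
  try ring

/-! ### Bilinearity of YB2 -/

theorem YB2_add_left (r r' s : TT2) (μ ν lam : Bas) :
    YB2 (fun a b => r a b + r' a b) s μ ν lam = YB2 r s μ ν lam + YB2 r' s μ ν lam := by
  unfold YB2
  simp only [add_mul, Finset.sum_add_distrib]
  ring

theorem YB2_add_right (r s s' : TT2) (μ ν lam : Bas) :
    YB2 r (fun a b => s a b + s' a b) μ ν lam = YB2 r s μ ν lam + YB2 r s' μ ν lam := by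
  unfold YB2
  simp only [mul_add, add_mul, Finset.sum_add_distrib]
  ring

theorem YB2_smul_left (c : ℝ) (r s : TT2) (μ ν lam : Bas) :
    YB2 (fun a b => c * r a b) s μ ν lam = c * YB2 r s μ ν lam := by
  unfold YB2
  simp only [mul_add, Finset.mul_sum]
  congr 1
  congr 1
  all_goals
    refine Finset.sum_congr rfl fun a _ => ?_
    refine Finset.sum_congr rfl fun b _ => ?_
    ring

theorem YB2_smul_right (c : ℝ) (r s : TT2) (μ ν lam : Bas) :
    YB2 r (fun a b => c * s a b) μ ν lam = c * YB2 r s μ ν lam := by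
  unfold YB2
  simp only [mul_add, Finset.mul_sum]
  congr 1
  congr 1
  all_goals
    refine Finset.sum_congr rfl fun a _ => ?_
    refine Finset.sum_congr rfl fun b _ => ?_
    ring

/-! ### Decompositions of ra and rho19 -/

theorem rSym_cast (μ ν : Bas) : rSym μ ν = (1/2 : ℝ) * (SZf μ ν : ℝ) := by
  have : (SZf μ ν : ℝ) = ∑ a, ηm a * (tens (Pb a) (Jb a) μ ν + tens (Jb a) (Pb a) μ ν) := by
    rw [Fin.sum_univ_three]
    simp only [SZf, sum3]
    push_cast
    rw [ηm_cast, ηm_cast, ηm_cast, Pb_cast, Pb_cast, Pb_cast, Jb_cast, Jb_cast, Jb_cast,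
      tens_cast, tens_cast, tens_cast, tens_cast, tens_cast, tens_cast]
    try push_cast
    try ring
  rw [rSym, this]

theorem wedge_cast (x y : iso21Z) (μ ν : Bas) :
    wedgeT (castIso x) (castIso y) μ ν = (wedgeZ x y μ ν : ℝ) := by
  simp only [wedgeT, wedgeZ, tens_cast]
  push_cast
  ring

theorem ra_decomp (ψ α : ℝ) : ra ψ α = fun μ ν =>
    (1/2 : ℝ) * (SZf μ ν : ℝ) + ((1/2) * Real.tan (ψ/2)) * (AZ μ ν : ℝ)
      + (α / (4 * (Real.cos (ψ/2))^2)) * (BZ μ ν : ℝ) := by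
  funext μ ν
  rw [ra, rSym_cast, Pb_cast 1, Pb_cast 2, Jb_cast 1, Jb_cast 2,
    wedge_cast, wedge_cast, wedge_cast]
  simp only [AZ, BZ]
  push_cast
  ring

theorem W_cast (σ τ : Bas) :
    tens (Pb 0) (Jb 0) σ τ - tens (Jb 0) (Pb 0) σ τ = (WZ σ τ : ℝ) := by
  rw [Pb_cast, Jb_cast, tens_cast, tens_cast]
  simp only [WZ, wedgeZ]
  push_cast
  ring

theorem rho_decomp (β δ : ℝ → ℝ) (ψ : ℝ) :
    rho19 β δ ψ = fun σ τ => (deriv β ψ - δ ψ) * (WZ σ τ : ℝ) := by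
  funext σ τ
  rw [rho19, W_cast]

/-! ### Parts 1 and 2 -/

theorem part1 (β δ : ℝ → ℝ) (ψ α : ℝ) (μ ν lam : Bas) :
    YB2 (ra ψ α) (rho19 β δ ψ) μ ν lam + YB2 (rho19 β δ ψ) (ra ψ α) μ ν lam = 0 := by
  rw [ra_decomp, rho_decomp]
  set c1 : ℝ := (1/2 : ℝ)
  set c2 : ℝ := (1/2) * Real.tan (ψ/2)
  set c3 : ℝ := α / (4 * (Real.cos (ψ/2))^2)
  set k : ℝ := deriv β ψ - δ ψ
  simp only [YB2_add_left, YB2_add_right, YB2_smul_left, YB2_smul_right, YB2_cast]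
  have hS : ((YB2F SZf WZ μ ν lam : ℝ)) + ((YB2F WZ SZf μ ν lam : ℝ)) = 0 := by
    exact_mod_cast congrArg (fun z : ℤ => (z : ℝ)) (coreS μ ν lam)
  have hA : ((YB2F AZ WZ μ ν lam : ℝ)) + ((YB2F WZ AZ μ ν lam : ℝ)) = 0 := by
    exact_mod_cast congrArg (fun z : ℤ => (z : ℝ)) (coreA μ ν lam)
  have hB : ((YB2F BZ WZ μ ν lam : ℝ)) + ((YB2F WZ BZ μ ν lam : ℝ)) = 0 := by
    exact_mod_cast congrArg (fun z : ℤ => (z : ℝ)) (coreB μ ν lam)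
  linear_combination (c1 * k) * hS + (c2 * k) * hA + (c3 * k) * hB

theorem part2 (β δ : ℝ → ℝ) (ψ : ℝ) (μ ν lam : Bas) :
    YB2 (rho19 β δ ψ) (rho19 β δ ψ) μ ν lam = 0 := by
  rw [rho_decomp]
  simp only [YB2_smul_left, YB2_smul_right, YB2_cast]
  have hW : ((YB2F WZ WZ μ ν lam : ℝ)) = 0 := by exact_mod_cast coreW μ ν lam
  rw [hW]; ring


/-! ### Part 3 helpers -/

theorem SZf_PJ : SZf (true,0) (false,0) = 1 := by decide
theorem AZ_PJ : AZ (true,0) (false,0) = 0 := by decide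
theorem BZ_PJ : BZ (true,0) (false,0) = 0 := by decide
theorem SZf_JP : SZf (false,0) (true,0) = 1 := by decide
theorem AZ_JP : AZ (false,0) (true,0) = 0 := by decide
theorem BZ_JP : BZ (false,0) (true,0) = 0 := by decide

theorem ra_PJ (s a : ℝ) : ra s a (true,0) (false,0) = 1/2 := by
  rw [ra_decomp]
  simp [SZf_PJ, AZ_PJ, BZ_PJ]

theorem ra_JP (s a : ℝ) : ra s a (false,0) (true,0) = 1/2 := by
  rw [ra_decomp]
  simp [SZf_JP, AZ_JP, BZ_JP]

theorem deriv_mix (β δ : ℝ → ℝ) (ψ α : ℝ) (σ τ : Bas) :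
    deriv (fun s => ra s α σ τ + rho19 β δ s σ τ) ψ
      = deriv (fun s => ra s α σ τ) ψ
        + (WZ σ τ : ℝ) * deriv (fun s => deriv β s - δ s) ψ := by
  have trich : WZ σ τ = 0
      ∨ (σ = ((true,0) : Bas) ∧ τ = ((false,0) : Bas) ∧ WZ σ τ = 1)
      ∨ (σ = ((false,0) : Bas) ∧ τ = ((true,0) : Bas) ∧ WZ σ τ = -1) := by
    revert σ τ; decide
  simp only [rho19, W_cast]
  rcases trich with h | ⟨hσ, hτ, h⟩ | ⟨hσ, hτ, h⟩
  · rw [h]; simp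
  · subst hσ; subst hτ; rw [h]
    simp only [Int.cast_one, mul_one, ra_PJ]
    rw [deriv_const_add]
    simp
  · subst hσ; subst hτ; rw [h]
    simp only [Int.cast_neg, Int.cast_one, mul_neg_one, ra_JP]
    rw [deriv_const_add, deriv.fun_neg]
    simp

theorem combPW_real (μ ν lam : Bas) :
    coeff (Pb 0) μ * (WZ ν lam : ℝ) - coeff (Pb 0) ν * (WZ μ lam : ℝ)
      + coeff (Pb 0) lam * (WZ μ ν : ℝ) = 0 := by
  rw [Pb_cast, coeff_cast, coeff_cast, coeff_cast]
  exact_mod_cast combPW μ ν lam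

/-- [[r_a,ρ]] + [[ρ,r_a]] = 0 and [[ρ,ρ]] = 0; consequently, if r_a
satisfies the CDYBE with x₁ = P₀, x₂ = J₀, then so does r_a + ρ. -/
theorem stmt19 (β δ : ℝ → ℝ) :
    (∀ ψ ∈ Set.Ioo (-(π/2)) (π/2), ∀ α : ℝ, ∀ μ ν lam : Bas,
      YB2 (ra ψ α) (rho19 β δ ψ) μ ν lam + YB2 (rho19 β δ ψ) (ra ψ α) μ ν lam = 0) ∧
    (∀ ψ : ℝ, ∀ μ ν lam : Bas, YB2 (rho19 β δ ψ) (rho19 β δ ψ) μ ν lam = 0) ∧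
    ((∀ ψ ∈ Set.Ioo (-(π/2)) (π/2), ∀ α : ℝ,
        CDYBEat ra (fun _ _ => Pb 0) (fun _ _ => Jb 0) ψ α) →
      ∀ ψ ∈ Set.Ioo (-(π/2)) (π/2), ∀ α : ℝ,
        CDYBEat (fun s a => fun σ τ => ra s a σ τ + rho19 β δ s σ τ)
          (fun _ _ => Pb 0) (fun _ _ => Jb 0) ψ α) := by
  refine ⟨fun ψ _ α μ ν lam => part1 β δ ψ α μ ν lam,
    fun ψ μ ν lam => part2 β δ ψ μ ν lam, ?_⟩
  intro h ψ hψ α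
  have hold := h ψ hψ α
  unfold CDYBEat at hold ⊢
  intro μ ν lam
  have hlhs : YB2 (fun σ τ => ra ψ α σ τ + rho19 β δ ψ σ τ)
      (fun σ τ => ra ψ α σ τ + rho19 β δ ψ σ τ) μ ν lam
      = YB2 (ra ψ α) (ra ψ α) μ ν lam := by
    rw [YB2_add_left, YB2_add_right, YB2_add_right]
    have h1 := part1 β δ ψ α μ ν lam
    have h2 := part2 β δ ψ μ ν lam
    linarith
  have hd1 := deriv_mix β δ ψ α ν lam
  have hd2 := deriv_mix β δ ψ α μ lam
  have hd3 := deriv_mix β δ ψ α μ ν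
  have hc := combPW_real μ ν lam
  have holdm := hold μ ν lam
  simp only [deriv_add_const]
  rw [hlhs, hd1, hd2, hd3, holdm]
  linear_combination (-(deriv (fun s => deriv β s - δ s) ψ)) * hc
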